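/- arXiv:2204.06992 — 2 statements merged into one kernel-verified Lean document; each statement's English description precedes it below -/
import Mathlib

section
/- Let ~ be the congruence on the free monoid on {x, y} generated by the single relation yx = xxyy. Then every word equivalent to yxx under ~ has the form x^{2k}·yxx·y^{2k} or x^{2k}·xxyyx·y^{2k} for some natural number k. -/
/-- The letter `x` of the two-letter alphabet. -/
def xw : FreeMonoid Bool := FreeMonoid.of false

/-- The letter `y` of the two-letter alphabet. -/
def yw : FreeMonoid Bool := FreeMonoid.of true

/-- The congruence on the free monoid on `{x, y}` generated by the single relation
`yx = xxyy`. -/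
def yxCon : Con (FreeMonoid Bool) :=
  conGen (fun a b => a = yw * xw ∧ b = xw * xw * yw * yw)


private lemma noTF : ∀ (l : List Bool) (a b : ℕ) (r : List Bool),
    l ++ true :: false :: r ≠ List.replicate a false ++ List.replicate b true := by
  intro l
  induction l with
  | nil =>
    rintro (_|a) (_|_|b) r h <;> simp [List.replicate_succ] at h
  | cons c l ih =>
    rintro (_|a) (_|b) r h
    · simp at h
    · simp only [List.replicate_zero, List.nil_append, List.replicate_succ,
        List.cons_append, List.cons.injEq] at h
      exact ih 0 b r (by simpa using h.2)
    · simp only [List.replicate_succ, List.cons_append, List.cons.injEq] at h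
      exact ih a 0 r h.2
    · simp only [List.replicate_succ, List.cons_append, List.cons.injEq] at h
      exact ih a (b+1) r (by simp only [List.replicate_succ, List.cons_append]; exact h.2)

lemma occ_yx_A : ∀ (l : List Bool) (n m : ℕ) (r : List Bool),
    l ++ true :: false :: r
      = List.replicate n false ++ true :: false :: false :: List.replicate m true →
    l = List.replicate n false ∧ r = false :: List.replicate m true := by
  intro l
  induction l with
  | nil =>
    rintro (_|n) m r h
    · simp_all
    · simp [List.replicate_succ] at h
  | cons c l ih =>
    rintro (_|n) m r h
    · exfalso
      simp only [List.replicate_zero, List.nil_append, List.cons_append, List.cons.injEq] at h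
      refine noTF l 2 m r ?_
      rw [h.2]; simp [List.replicate_succ]
    · simp only [List.replicate_succ, List.cons_append, List.cons.injEq] at h
      obtain ⟨hl, hr⟩ := ih n m r h.2
      exact ⟨by simp [List.replicate_succ, h.1, hl], hr⟩

lemma occ_yx_B : ∀ (l : List Bool) (n m : ℕ) (r : List Bool),
    l ++ true :: false :: r
      = List.replicate n false ++ false :: false :: true :: true :: false :: List.replicate m true →
    l = List.replicate n false ++ [false, false, true] ∧ r = List.replicate m true := by
  intro l
  induction l with
  | nil => rintro (_|n) m r h <;> simp [List.replicate_succ] at h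
  | cons c l ih =>
    rintro (_|n) m r h
    · simp only [List.replicate_zero, List.nil_append, List.cons_append, List.cons.injEq] at h
      obtain ⟨rfl, h⟩ := h
      rcases l with _ | ⟨d, _ | ⟨e, _ | ⟨g, l⟩⟩⟩
      · simp at h
      · simp only [List.cons_append, List.cons.injEq, List.nil_append] at h
        simp at h
      · simp only [List.cons_append, List.cons.injEq, List.nil_append] at h
        obtain ⟨rfl, rfl, hr⟩ := h
        simp [hr]
      · simp only [List.cons_append, List.cons.injEq, List.nil_append] at h
        obtain ⟨rfl, rfl, rfl, h⟩ := h
        exact absurd (h.trans (by simp [List.replicate_succ])) (noTF l 1 m r)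
    · simp only [List.replicate_succ, List.cons_append, List.cons.injEq] at h
      obtain ⟨rfl, h⟩ := h
      obtain ⟨hl, hr⟩ := ih n m r h
      exact ⟨by simp [List.replicate_succ, hl], hr⟩


lemma noF : ∀ (l : List Bool) (m : ℕ) (r : List Bool),
    l ++ false :: r ≠ List.replicate m true := by
  intro l m r h
  have : false ∈ List.replicate m true := by rw [← h]; simp
  simp [List.mem_replicate] at this

lemma consT : ∀ (n : ℕ) (X Y : List Bool),
    true :: X ≠ List.replicate n false ++ false :: Y := by
  rintro (_|n) X Y h <;> simp [List.replicate_succ] at h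

lemma occ_ff_A : ∀ (l : List Bool) (n m : ℕ) (r : List Bool),
    l ++ false :: false :: true :: true :: r
      = List.replicate n false ++ true :: false :: false :: List.replicate m true →
    ∃ m', m = m' + 2 ∧ l = List.replicate n false ++ [true] ∧ r = List.replicate m' true := by
  intro l
  induction l with
  | nil => rintro (_|_|_|n) m r h <;> simp [List.replicate_succ] at h
  | cons c l ih =>
    rintro (_|n) m r h
    · simp only [List.replicate_zero, List.nil_append, List.cons_append, List.cons.injEq] at h
      obtain ⟨rfl, h⟩ := h
      rcases l with _ | ⟨d, _ | ⟨e, l⟩⟩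
      · simp only [List.nil_append, List.cons.injEq] at h
        obtain ⟨-, -, h⟩ := h
        rcases m with _|_|m
        · simp at h
        · simp [List.replicate_succ] at h
        · refine ⟨m, rfl, by simp, ?_⟩
          simpa [List.replicate_succ] using h
      · simp only [List.cons_append, List.cons.injEq, List.nil_append] at h
        obtain ⟨rfl, -, h⟩ := h
        rcases m with _|m
        · simp at h
        · simp [List.replicate_succ] at h
      · simp only [List.cons_append, List.cons.injEq, List.nil_append] at h
        obtain ⟨rfl, rfl, h⟩ := h
        exact absurd h (noF l m _)
    · simp only [List.replicate_succ, List.cons_append, List.cons.injEq] at h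
      obtain ⟨rfl, h⟩ := h
      obtain ⟨m', hm, hl, hr⟩ := ih n m r h
      exact ⟨m', hm, by simp [List.replicate_succ, hl], hr⟩

lemma occ_ff_B : ∀ (l : List Bool) (n m : ℕ) (r : List Bool),
    l ++ false :: false :: true :: true :: r
      = List.replicate n false ++ false :: false :: true :: true :: false :: List.replicate m true →
    l = List.replicate n false ∧ r = false :: List.replicate m true := by
  intro l
  induction l with
  | nil =>
    rintro (_|_|n) m r h
    · simp only [List.replicate_zero, List.nil_append, List.cons.injEq, true_and] at h ⊢
      exact h
    · simp [List.replicate_succ] at h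
    · simp only [List.replicate_succ, List.cons_append, List.cons.injEq, List.nil_append] at h
      exact absurd h.2.2 (consT n _ _)
  | cons c l ih =>
    rintro (_|n) m r h
    · simp only [List.replicate_zero, List.nil_append, List.cons_append, List.cons.injEq] at h
      obtain ⟨rfl, h⟩ := h
      rcases l with _ | ⟨d, _ | ⟨e, _ | ⟨g, _ | ⟨i, l⟩⟩⟩⟩
      · simp at h
      · simp only [List.cons_append, List.cons.injEq, List.nil_append] at h
        simp at h
      · simp only [List.cons_append, List.cons.injEq, List.nil_append] at h
        simp at h
      · simp only [List.cons_append, List.cons.injEq, List.nil_append] at h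
        obtain ⟨rfl, rfl, rfl, -, h⟩ := h
        rcases m with _|m
        · simp at h
        · simp [List.replicate_succ] at h
      · simp only [List.cons_append, List.cons.injEq, List.nil_append] at h
        obtain ⟨rfl, rfl, rfl, rfl, h⟩ := h
        exact absurd h (noF l m _)
    · simp only [List.replicate_succ, List.cons_append, List.cons.injEq] at h
      obtain ⟨rfl, h⟩ := h
      obtain ⟨hl, hr⟩ := ih n m r h
      exact ⟨by simp [List.replicate_succ, hl], hr⟩

def StepR (a b : FreeMonoid Bool) : Prop :=
  ∃ l r : List Bool, FreeMonoid.toList a = l ++ [true, false] ++ r ∧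
    FreeMonoid.toList b = l ++ [false, false, true, true] ++ r

lemma stepR_mul_left (c : FreeMonoid Bool) {a b : FreeMonoid Bool} (h : StepR a b) :
    StepR (c * a) (c * b) := by
  obtain ⟨l, r, ha, hb⟩ := h
  exact ⟨FreeMonoid.toList c ++ l, r, by simp [ha], by simp [hb]⟩

lemma stepR_mul_right (c : FreeMonoid Bool) {a b : FreeMonoid Bool} (h : StepR a b) :
    StepR (a * c) (b * c) := by
  obtain ⟨l, r, ha, hb⟩ := h
  exact ⟨l, r ++ FreeMonoid.toList c, by simp [ha], by simp [hb]⟩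

lemma eqvGen_mul_right (c : FreeMonoid Bool) {a b : FreeMonoid Bool}
    (h : Relation.EqvGen StepR a b) : Relation.EqvGen StepR (a * c) (b * c) := by
  induction h with
  | rel x y h => exact Relation.EqvGen.rel _ _ (stepR_mul_right c h)
  | refl x => exact Relation.EqvGen.refl _
  | symm x y _ ih => exact Relation.EqvGen.symm _ _ ih
  | trans x y z _ _ ih1 ih2 => exact Relation.EqvGen.trans _ _ _ ih1 ih2

lemma eqvGen_mul_left (c : FreeMonoid Bool) {a b : FreeMonoid Bool}
    (h : Relation.EqvGen StepR a b) : Relation.EqvGen StepR (c * a) (c * b) := by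
  induction h with
  | rel x y h => exact Relation.EqvGen.rel _ _ (stepR_mul_left c h)
  | refl x => exact Relation.EqvGen.refl _
  | symm x y _ ih => exact Relation.EqvGen.symm _ _ ih
  | trans x y z _ _ ih1 ih2 => exact Relation.EqvGen.trans _ _ _ ih1 ih2

def stepCon : Con (FreeMonoid Bool) where
  r := Relation.EqvGen StepR
  iseqv := Relation.EqvGen.is_equivalence _
  mul' := fun {w x y z} h1 h2 =>
    Relation.EqvGen.trans _ _ _ (eqvGen_mul_right y h1) (eqvGen_mul_left x h2)

lemma yxCon_le : yxCon ≤ stepCon := by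
  apply Con.conGen_le.mpr
  rintro a b ⟨rfl, rfl⟩
  exact Relation.EqvGen.rel _ _ ⟨[], [], by simp [yw, xw], by simp [yw, xw]⟩

lemma rep_comm (n m : ℕ) (a : Bool) :
    List.replicate n a ++ List.replicate m a = List.replicate m a ++ List.replicate n a := by
  rw [← List.replicate_add, ← List.replicate_add, Nat.add_comm]

def SS (L : List Bool) : Prop := ∃ k : ℕ,
  L = List.replicate (2*k) false ++ true :: false :: false :: List.replicate (2*k) true ∨
  L = List.replicate (2*k) false ++ false :: false :: true :: true :: false :: List.replicate (2*k) true

lemma SS_fwd (l r : List Bool) (L : List Bool) (h1 : L = l ++ [true, false] ++ r)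
    (h2 : SS L) (M : List Bool) (h3 : M = l ++ [false, false, true, true] ++ r) : SS M := by
  obtain ⟨k, hA | hB⟩ := h2
  · obtain ⟨rfl, rfl⟩ := occ_yx_A l _ _ r (by simpa using h1.symm.trans hA)
    exact ⟨k, Or.inr (by simpa using h3)⟩
  · obtain ⟨rfl, rfl⟩ := occ_yx_B l _ _ r (by simpa using h1.symm.trans hB)
    refine ⟨k + 1, Or.inl ?_⟩
    have e : 2 * (k + 1) = 2 * k + 2 := by ring
    rw [h3, e, List.replicate_add, List.replicate_add]
    simp only [List.append_assoc, List.cons_append, List.nil_append]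
    rw [show (List.replicate 2 false : List Bool) = [false, false] from rfl]
    rw [show (List.replicate 2 true : List Bool) = [true, true] from rfl]
    simp only [List.append_assoc, List.cons_append, List.nil_append, List.cons.injEq, true_and]
    rw [show (true :: true :: List.replicate (2*k) true : List Bool)
      = List.replicate 2 true ++ List.replicate (2*k) true from rfl,
      show ([true, true] : List Bool) = List.replicate 2 true from rfl]
    exact (rep_comm _ _ _).symm ▸ rfl

lemma SS_bwd (l r : List Bool) (L : List Bool) (h1 : L = l ++ [true, false] ++ r)
    (M : List Bool) (h3 : M = l ++ [false, false, true, true] ++ r) (h2 : SS M) : SS L := by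
  obtain ⟨k, hA | hB⟩ := h2
  · obtain ⟨m', hm, rfl, rfl⟩ := occ_ff_A l _ _ r (by simpa using h3.symm.trans hA)
    obtain ⟨k', rfl⟩ : ∃ k', k = k' + 1 := ⟨k - 1, by omega⟩
    have e2 : m' = 2 * k' := by omega
    refine ⟨k', Or.inr ?_⟩
    subst e2
    have e : 2 * (k' + 1) = 2 * k' + 2 := by ring
    rw [h1, e, List.replicate_add]
    simp only [List.append_assoc, List.cons_append, List.nil_append]
    rw [show (List.replicate 2 false : List Bool) = [false, false] from rfl]
    simp
  · obtain ⟨rfl, rfl⟩ := occ_ff_B l _ _ r (by simpa using h3.symm.trans hB)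
    exact ⟨k, Or.inl (by simpa using h1)⟩

lemma toList_pow (a : Bool) (n : ℕ) :
    (FreeMonoid.of a ^ n).toList = List.replicate n a := by
  induction n with
  | zero => rfl
  | succ n ih => rw [pow_succ, FreeMonoid.toList_mul, ih, List.replicate_succ']; rfl

lemma eqv_SS {a b : FreeMonoid Bool} (h : Relation.EqvGen StepR a b) :
    SS a.toList ↔ SS b.toList := by
  induction h with
  | rel x y h =>
    obtain ⟨l, r, hx, hy⟩ := h
    exact ⟨fun hs => SS_fwd l r _ hx hs _ hy, fun hs => SS_bwd l r _ hx _ hy hs⟩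
  | refl x => exact Iff.rfl
  | symm x y _ ih => exact ih.symm
  | trans x y z _ _ ih1 ih2 => exact ih1.trans ih2

/-- Every word equivalent to `yxx` under the congruence generated by `yx = xxyy` has
the form `x^{2k} · yxx · y^{2k}` or `x^{2k} · xxyyx · y^{2k}` for some `k ∈ ℕ`. -/
theorem yxx_equiv_classification (w : FreeMonoid Bool) (hw : yxCon w (yw * xw * xw)) :
    ∃ k : ℕ,
      w = xw ^ (2 * k) * (yw * xw * xw) * yw ^ (2 * k) ∨
      w = xw ^ (2 * k) * (xw * xw * yw * yw * xw) * yw ^ (2 * k) := by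
  have h : stepCon w (yw * xw * xw) := yxCon_le hw
  have hs : SS (FreeMonoid.toList w) := by
    refine (eqv_SS h).mpr ⟨0, Or.inl ?_⟩
    simp [yw, xw]
  obtain ⟨k, hk | hk⟩ := hs
  · refine ⟨k, Or.inl ?_⟩
    apply FreeMonoid.toList.injective
    rw [hk]
    simp [yw, xw, toList_pow]
  · refine ⟨k, Or.inr ?_⟩
    apply FreeMonoid.toList.injective
    rw [hk]
    simp [yw, xw, toList_pow]
end

section
/- In Sing(I_n) with n ≥ 3, for distinct i, j, k the elements f̄_{i,j} satisfy f̄_{i,j} f̄_{i,k} = f̄_{j,k} f̄_{i,j} = f̄_{i,k} f̄_{j,k} and f̄_{i,j} f̄_{j,i} = f̄_{i,k} f̄_{k,i}, and for distinct i, j, k, l they satisfy f̄_{i,j} f̄_{k,l} = f̄_{k,l} f̄_{i,j} and f̄_{k,i} f̄_{i,j} f̄_{j,k} f̄_{k,l} = f̄_{k,l} f̄_{l,i} f̄_{i,j} f̄_{j,l}. -/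
set_option linter.unnecessarySeqFocus false


/-- Injective partial maps `{1,…,m} → {1,…,n}`, the hom-sets of the symmetric
inverse category `I`. -/
def PInj (m n : ℕ) : Type :=
  {f : Fin m → Option (Fin n) // ∀ i j k, f i = some k → f j = some k → i = j}

/-- Left-to-right relational composition of injective partial maps. -/
def PInj.comp {m n k : ℕ} (α : PInj m n) (β : PInj n k) : PInj m k :=
  ⟨fun i => (α.1 i).bind β.1, by
    intro i j c hi hj
    rcases Option.bind_eq_some_iff.mp hi with ⟨a, ha, ha'⟩
    rcases Option.bind_eq_some_iff.mp hj with ⟨b, hb, hb'⟩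
    obtain rfl : a = b := β.2 a b c ha' hb'
    exact α.2 i j a ha hb⟩

/-- The identity of `I_n`. -/
def PInj.id (n : ℕ) : PInj n n :=
  ⟨fun i => some i, by
    intro i j k hi hj
    rw [Option.some_inj] at hi hj
    rw [hi, hj]⟩

/-- The domain of a partial map. -/
def PInj.dom {m n : ℕ} (α : PInj m n) : Set (Fin m) := {i | (α.1 i).isSome}

/-- The action of `α ∈ I_{m,n}` on a tuple `a ∈ M₀ⁿ`, giving `ᵅa ∈ M₀ᵐ`. -/
def act {M : Type*} [Monoid M] {m n : ℕ} (α : PInj m n)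
    (a : Fin n → WithZero M) : Fin m → WithZero M :=
  fun i => (α.1 i).elim 0 a

/-- The support of a tuple over `M₀`. -/
def supp {M : Type*} [Monoid M] {n : ℕ} (a : Fin n → WithZero M) : Set (Fin n) :=
  {i | a i ≠ 0}

/-- Composition in the wreath product category `M ≀ I`:
`(a,α)∘(b,β) = (a · ᵅb, αβ)`. -/
def mulC {M : Type*} [Monoid M] {m n k : ℕ}
    (p : (Fin m → WithZero M) × PInj m n) (q : (Fin n → WithZero M) × PInj n k) :
    (Fin m → WithZero M) × PInj m k :=
  (p.1 * act p.2 q.1, p.2.comp q.2)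



/-- The transposition `(i j)` as an element of `I_n`. -/
def swapP {n : ℕ} (i j : Fin n) : PInj n n :=
  ⟨fun k => some (Equiv.swap i j k), by
    intro a b c ha hb
    rw [Option.some_inj] at ha hb
    exact (Equiv.swap i j).injective (ha.trans hb.symm)⟩

/-- The partial identity with domain `{1,…,n} \ {i}`. -/
def eP {n : ℕ} (i : Fin n) : PInj n n :=
  ⟨fun k => if k = i then none else some k, by
    intro a b c ha hb
    dsimp only at ha hb
    split_ifs at ha hb <;> simp_all⟩

/-- The map `f_{i,j} ∈ Sing(I_n)`: undefined at `i`, sends `j ↦ i`, fixes other points. -/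
def fP {n : ℕ} (i j : Fin n) : PInj n n :=
  ⟨fun k => if k = i then none else if k = j then some i else some k, by
    intro a b c ha hb
    dsimp only at ha hb
    split_ifs at ha hb <;> simp_all⟩

/-- The tuple in `M₀ⁿ` with entry `c` in position `i` and `1` elsewhere. -/
def tupAt {M : Type*} [Monoid M] {n : ℕ} (i : Fin n) (c : WithZero M) :
    Fin n → WithZero M :=
  fun k => if k = i then c else 1

/-- The `{0,1}`-tuple `1_{{i}ᶜ}` with support `{i}ᶜ`. -/
def oneE {M : Type*} [Monoid M] {n : ℕ} (i : Fin n) : Fin n → WithZero M :=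
  tupAt i 0

/-- The tuple `x⁽ⁱ⁾ = (1,…,1,x,1,…,1)` with `x ∈ M` in position `i`. -/
def xTup {M : Type*} [Monoid M] {n : ℕ} (i : Fin n) (x : M) : Fin n → WithZero M :=
  tupAt i (x : WithZero M)

open scoped Classical in
/-- The partial identity `id_{supp(a)}` on the support of a tuple. -/
noncomputable def idOnSupp {M : Type*} [Monoid M] {n : ℕ} (a : Fin n → WithZero M) :
    PInj n n :=
  ⟨fun i => if a i = 0 then none else some i, by
    intro i j c hi hj
    dsimp only at hi hj
    split_ifs at hi hj <;> simp_all⟩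

/-- The `{0,1}`-tuple `1_{dom(α)}` with support `dom(α)`. -/
def oneDom {M : Type*} [Monoid M] {m n : ℕ} (α : PInj m n) : Fin m → WithZero M :=
  fun i => if (α.1 i).isSome then 1 else 0

open scoped Classical in
/-- The restriction of `α` to the support of the tuple `a`. -/
noncomputable def restrictP {M : Type*} [Monoid M] {m n : ℕ}
    (a : Fin m → WithZero M) (α : PInj m n) : PInj m n :=
  ⟨fun i => if a i = 0 then none else α.1 i, by
    intro i j c hi hj
    dsimp only at hi hj
    split_ifs at hi hj <;> first
      | exact Option.noConfusion hi
      | exact Option.noConfusion hj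
      | exact α.2 i j c hi hj⟩

/-- The identity on `{1,…,n}` viewed as a partial map `{1,…,n} → {1,…,n+1}`. -/
def lamP (n : ℕ) : PInj n (n + 1) :=
  ⟨fun i => some i.castSucc, by
    intro i j c hi hj
    rw [Option.some_inj] at hi hj
    exact Fin.castSucc_injective n (hi.trans hj.symm)⟩

/-- The identity on `{1,…,n}` viewed as a partial map `{1,…,n+1} → {1,…,n}`,
undefined at `n+1`. -/
def rhoP (n : ℕ) : PInj (n + 1) n :=
  ⟨fun i => if h : (i : ℕ) < n then some ⟨i, h⟩ else none, by
    intro i j c hi hj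
    dsimp only at hi hj
    split_ifs at hi hj
    rw [Option.some_inj] at hi hj
    have : (i : ℕ) = (j : ℕ) := by
      have := congrArg Fin.val (hi.trans hj.symm)
      simpa using this
    exact Fin.ext this⟩

/-- The tensor (horizontal stacking) `α ⊕ β`. -/
def tensor {m n k l : ℕ} (α : PInj m n) (β : PInj k l) : PInj (m + k) (n + l) :=
  ⟨fun i =>
    if h : (i : ℕ) < m then (α.1 ⟨i, h⟩).map (Fin.castAdd l)
    else (β.1 ⟨(i : ℕ) - m, by have := i.isLt; omega⟩).map (Fin.natAdd n), by
    intro i j c hi hj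
    dsimp only at hi hj
    rcases Nat.lt_or_ge (i : ℕ) m with h1 | h1 <;> rcases Nat.lt_or_ge (j : ℕ) m with h2 | h2
    · rw [dif_pos h1] at hi; rw [dif_pos h2] at hj
      rcases Option.map_eq_some_iff.mp hi with ⟨a, ha, rfl⟩
      rcases Option.map_eq_some_iff.mp hj with ⟨b, hb, hab⟩
      have hba : b = a := by
        have := congrArg Fin.val hab
        simpa using Fin.ext this
      subst hba
      have := α.2 ⟨i, h1⟩ ⟨j, h2⟩ b ha hb
      have hv : (i : ℕ) = (j : ℕ) := by simpa using this
      exact Fin.ext hv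
    · rw [dif_pos h1] at hi; rw [dif_neg (by omega)] at hj
      rcases Option.map_eq_some_iff.mp hi with ⟨a, ha, rfl⟩
      rcases Option.map_eq_some_iff.mp hj with ⟨b, hb, hab⟩
      have hv : n + (b : ℕ) = (Fin.castAdd l a : ℕ) := by
        simpa using congrArg Fin.val hab
      have := a.isLt
      simp only [Fin.coe_castAdd] at hv
      omega
    · rw [dif_neg (by omega)] at hi; rw [dif_pos h2] at hj
      rcases Option.map_eq_some_iff.mp hj with ⟨a, ha, rfl⟩
      rcases Option.map_eq_some_iff.mp hi with ⟨b, hb, hab⟩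
      have hv : n + (b : ℕ) = (Fin.castAdd l a : ℕ) := by
        simpa using congrArg Fin.val hab
      have := a.isLt
      simp only [Fin.coe_castAdd] at hv
      omega
    · rw [dif_neg (by omega)] at hi; rw [dif_neg (by omega)] at hj
      rcases Option.map_eq_some_iff.mp hi with ⟨a, ha, hac⟩
      rcases Option.map_eq_some_iff.mp hj with ⟨b, hb, hbc⟩
      have hba : b = a := by
        have := congrArg Fin.val (hbc.trans hac.symm)
        simp only [Fin.coe_natAdd] at this
        exact Fin.ext (by omega)
      subst hba
      have := β.2 _ _ b ha hb
      have hv : (i : ℕ) - m = (j : ℕ) - m := by simpa using this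
      exact Fin.ext (by omega)⟩

/-- The unique element `U` of `I_{1,0}`. -/
def Upi : PInj 1 0 := ⟨fun _ => none, fun _ _ c _ _ => c.elim0⟩

/-- The unique element `Ū` of `I_{0,1}`. -/
def Ubar : PInj 0 1 := ⟨fun i => i.elim0, fun i _ _ _ _ => i.elim0⟩

/-- **Relations (SI3)–(SI7) (excluding (SI5),(SI6)) in `Sing(I_n)`** (`n ≥ 3`): for
distinct `i, j, k`: `f_{i,j} f_{i,k} = f_{j,k} f_{i,j} = f_{i,k} f_{j,k}` and
`f_{i,j} f_{j,i} = f_{i,k} f_{k,i}`; and for distinct `i, j, k, l`: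
`f_{i,j} f_{k,l} = f_{k,l} f_{i,j}` and
`f_{k,i} f_{i,j} f_{j,k} f_{k,l} = f_{k,l} f_{l,i} f_{i,j} f_{j,l}`. -/
theorem singular_f_relations' (n : ℕ) (hn : 3 ≤ n) :
    (∀ i j k : Fin n, i ≠ j → i ≠ k → j ≠ k →
      PInj.comp (fP i j) (fP i k) = PInj.comp (fP j k) (fP i j) ∧
      PInj.comp (fP j k) (fP i j) = PInj.comp (fP i k) (fP j k) ∧
      PInj.comp (fP i j) (fP j i) = PInj.comp (fP i k) (fP k i)) ∧
    (∀ i j k l : Fin n, i ≠ j → i ≠ k → i ≠ l → j ≠ k → j ≠ l → k ≠ l →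
      PInj.comp (fP i j) (fP k l) = PInj.comp (fP k l) (fP i j) ∧
      PInj.comp (PInj.comp (PInj.comp (fP k i) (fP i j)) (fP j k)) (fP k l)
        = PInj.comp (PInj.comp (PInj.comp (fP k l) (fP l i)) (fP i j)) (fP j l)) := by
  have key : ∀ (α β : PInj n n), (∀ x, (α.1 x).bind β.1 = α.1 x) → True := fun _ _ _ => trivial
  constructor
  · intro i j k hij hik hjk
    refine ⟨?_, ?_, ?_⟩ <;>
    · apply Subtype.ext; funext x
      simp only [PInj.comp, fP]
      by_cases h1 : x = i <;> by_cases h2 : x = j <;> by_cases h3 : x = k <;>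
        simp_all [Option.bind, Ne.symm hij, Ne.symm hik, Ne.symm hjk]
  · intro i j k l hij hik hil hjk hjl hkl
    constructor <;>
    · apply Subtype.ext; funext x
      simp only [PInj.comp, fP]
      by_cases h1 : x = i <;> by_cases h2 : x = j <;> by_cases h3 : x = k <;>
        by_cases h4 : x = l <;>
        simp_all [Option.bind, Ne.symm hij, Ne.symm hik, Ne.symm hil, Ne.symm hjk,
          Ne.symm hjl, Ne.symm hkl]
end
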